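/- arXiv:2207.05459 — 10 statements merged into one kernel-verified Lean document; each statement's English description precedes it below -/
import Mathlib

section
/- Let E and F be vector lattices (Riesz spaces) and T : E → F a positive, injective, interval preserving linear operator. Then T is a lattice homomorphism onto its range, and its range is an ideal of F. -/
/-- If `T : E → F` is a positive, injective, interval preserving linear
operator between vector lattices, then `T` is a lattice homomorphism (hence a lattice
isomorphism onto its range) and its range is an ideal (solid subspace) of `F`. -/
theorem positive_injective_intervalPreserving_isLatticeHom_and_range_ideal
    {E F : Type*}
    [Lattice E] [AddCommGroup E] [CovariantClass E E (· + ·) (· ≤ ·)] [Module ℝ E]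
    [Lattice F] [AddCommGroup F] [CovariantClass F F (· + ·) (· ≤ ·)] [Module ℝ F]
    (T : E →ₗ[ℝ] F)
    (hpos : ∀ x : E, 0 ≤ x → 0 ≤ T x)
    (hinj : Function.Injective T)
    (hip : ∀ u : E, 0 ≤ u → T '' Set.Icc 0 u = Set.Icc 0 (T u)) :
    (∀ x y : E, T (x ⊔ y) = T x ⊔ T y) ∧
    (∀ y ∈ Set.range T, ∀ z : F, |z| ≤ |y| → z ∈ Set.range T) := by
  have hmono : ∀ {x y : E}, x ≤ y → T x ≤ T y := by
    intro x y h
    have := hpos (y - x) (by simpa [sub_nonneg] using h)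
    simpa [map_sub, sub_nonneg] using this
  have key : ∀ x : E, T (x ⊔ 0) = T x ⊔ 0 := by
    intro x
    have hxp : (0:E) ≤ x ⊔ 0 := le_sup_right
    have hxn : (0:E) ≤ (-x) ⊔ 0 := le_sup_right
    have h1 : T x ⊔ 0 ∈ Set.Icc (0:F) (T (x ⊔ 0)) :=
      ⟨le_sup_right, sup_le (hmono le_sup_left) (hpos _ hxp)⟩
    have h2 : (-(T x)) ⊔ 0 ∈ Set.Icc (0:F) (T ((-x) ⊔ 0)) :=
      ⟨le_sup_right, sup_le
        (by simpa using hmono (le_sup_left : -x ≤ (-x) ⊔ 0)) (hpos _ hxn)⟩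
    rw [← hip _ hxp] at h1
    rw [← hip _ hxn] at h2
    obtain ⟨w, ⟨hw0, hw1⟩, hw⟩ := h1
    obtain ⟨v, ⟨hv0, hv1⟩, hv⟩ := h2
    have hdecomp : (T x ⊔ 0) - ((-(T x)) ⊔ 0) = T x := posPart_sub_negPart (T x)
    have hwv : w - v = x := by
      apply hinj
      rw [map_sub, hw, hv, hdecomp]
    have hd1 : x ⊔ 0 - w = ((-x) ⊔ 0) - v := by
      have hE : (x ⊔ 0) - ((-x) ⊔ 0) = x := posPart_sub_negPart x
      have : (x ⊔ 0) - ((-x) ⊔ 0) = w - v := by rw [hE, hwv]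
      linear_combination (norm := abel) this
    have hd0 : 0 ≤ x ⊔ 0 - w := sub_nonneg.2 hw1
    have hdle1 : x ⊔ 0 - w ≤ x ⊔ 0 := by
      simpa using sub_le_self (x ⊔ 0) hw0
    have hdle2 : x ⊔ 0 - w ≤ (-x) ⊔ 0 := by
      rw [hd1]; simpa using sub_le_self ((-x) ⊔ 0) hv0
    have hinf : (x ⊔ 0) ⊓ ((-x) ⊔ 0) = 0 := posPart_inf_negPart_eq_zero x
    have hdz : x ⊔ 0 - w = 0 :=
      le_antisymm ((le_inf hdle1 hdle2).trans hinf.le) hd0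
    have hweq : w = x ⊔ 0 := by
      have := sub_eq_zero.mp hdz
      exact this.symm
    rw [← hweq, hw]
  have hsup : ∀ x y : E, T (x ⊔ y) = T x ⊔ T y := by
    intro x y
    have h : x ⊔ y = ((x - y) ⊔ 0) + y := by
      rw [sup_add, zero_add, sub_add_cancel]
    rw [h, map_add, key, map_sub, sup_add, zero_add, sub_add_cancel]
  refine ⟨hsup, ?_⟩
  rintro _ ⟨a, rfl⟩ z hz
  have habs : |T a| ≤ T |a| := by
    rw [abs_le']
    refine ⟨hmono (le_abs_self a), ?_⟩
    have := hmono (neg_le_abs a)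
    rw [map_neg] at this
    exact this
  have hTa : (0:E) ≤ |a| := abs_nonneg a
  have hzp : z ⊔ 0 ∈ Set.Icc (0:F) (T |a|) :=
    ⟨le_sup_right, (sup_le (le_abs_self z) (abs_nonneg z)).trans (hz.trans habs)⟩
  have hzn : (-z) ⊔ 0 ∈ Set.Icc (0:F) (T |a|) :=
    ⟨le_sup_right, (sup_le (neg_le_abs z) (abs_nonneg z)).trans (hz.trans habs)⟩
  rw [← hip _ hTa] at hzp hzn
  obtain ⟨p, _, hp⟩ := hzp
  obtain ⟨q, _, hq⟩ := hzn
  exact ⟨p - q, by rw [map_sub, hp, hq]; exact posPart_sub_negPart z⟩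
end

section
/- Let E and F be vector lattices and T : E → F a positive lattice homomorphism whose range T[E] is an ideal in F. Then T is interval preserving, i.e., for every 0 ≤ u in E, T[[0,u]] = [0, T u]. -/
/-- If `T : E → F` is a positive lattice homomorphism between vector
lattices whose range is an ideal of `F`, then `T` is interval preserving:
`T [[0,u]] = [0, T u]` for every `0 ≤ u`. -/
theorem latticeHom_range_ideal_intervalPreserving
    {E F : Type*}
    [Lattice E] [AddCommGroup E] [CovariantClass E E (· + ·) (· ≤ ·)] [Module ℝ E]
    [Lattice F] [AddCommGroup F] [CovariantClass F F (· + ·) (· ≤ ·)] [Module ℝ F]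
    (T : E →ₗ[ℝ] F)
    (hpos : ∀ x : E, 0 ≤ x → 0 ≤ T x)
    (hlat : ∀ x y : E, T (x ⊔ y) = T x ⊔ T y)
    (hideal : ∀ y ∈ Set.range T, ∀ z : F, |z| ≤ |y| → z ∈ Set.range T) :
    ∀ u : E, 0 ≤ u → T '' Set.Icc 0 u = Set.Icc 0 (T u) := by
  have hinf : ∀ x y : E, T (x ⊓ y) = T x ⊓ T y := by
    intro x y
    have h1 : x ⊓ y = x + y - x ⊔ y := by
      rw [eq_sub_iff_add_eq, inf_add_sup]
    have h2 : T x ⊓ T y = T x + T y - T x ⊔ T y := by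
      rw [eq_sub_iff_add_eq, inf_add_sup]
    rw [h1, h2, map_sub, map_add, hlat]
  intro u hu
  ext v
  constructor
  · rintro ⟨x, ⟨hx0, hxu⟩, rfl⟩
    refine ⟨hpos x hx0, ?_⟩
    have : T (x ⊔ u) = T x ⊔ T u := hlat x u
    rw [sup_eq_right.mpr hxu] at this
    rw [this]
    exact le_sup_left
  · rintro ⟨hv0, hvu⟩
    have habs : |v| ≤ |T u| := by
      rw [abs_of_nonneg hv0, abs_of_nonneg (hv0.trans hvu)]
      exact hvu
    obtain ⟨w, rfl⟩ := hideal (T u) ⟨u, rfl⟩ _ habs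
    refine ⟨(w ⊔ 0) ⊓ u, ⟨le_inf (le_sup_right) hu, inf_le_right⟩, ?_⟩
    rw [hinf, hlat, map_zero, sup_eq_left.mpr hv0, inf_eq_left.mpr hvu]
end

section
/- Let E, F be vector lattices and T : E → F a positive interval preserving linear operator. Then the order adjoint T^∼ : F^∼ → E^∼, defined by T^∼(φ) = φ ∘ T, is a lattice homomorphism. -/
section OrderDual

variable {X : Type*} [Lattice X] [AddCommGroup X] [Module ℝ X]

/-- `φ` is an order bounded linear functional: it is bounded on order intervals. -/
def OrdBddFunctional (φ : X →ₗ[ℝ] ℝ) : Prop :=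
  ∀ u : X, 0 ≤ u → BddAbove (φ '' Set.Icc 0 u) ∧ BddBelow (φ '' Set.Icc 0 u)

/-- The Riesz–Kantorovich set whose supremum is `(f ⊔ g)(u)` in the order dual:
`{ f v + g (u - v) : 0 ≤ v ≤ u }`. -/
def rkSet (f g : X →ₗ[ℝ] ℝ) (u : X) : Set ℝ :=
  (fun v => f v + g (u - v)) '' Set.Icc 0 u

end OrderDual

/-- If `T : E → F` is a positive interval preserving linear operator
between vector lattices, then the order adjoint `T^∼ : F^∼ → E^∼`, `φ ↦ φ ∘ T`, is a
lattice homomorphism.  By the Riesz–Kantorovich formula, this says precisely that for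
all order bounded `φ, ψ` on `F` one has
`((φ ∘ T) ⊔ (ψ ∘ T))(u) = ((φ ⊔ ψ) ∘ T)(u)` for every `0 ≤ u`, where the suprema in
the order duals are computed by the Riesz–Kantorovich formula. -/
theorem orderAdjoint_latticeHom_of_intervalPreserving
    {E F : Type*}
    [Lattice E] [AddCommGroup E] [CovariantClass E E (· + ·) (· ≤ ·)] [Module ℝ E]
    [Lattice F] [AddCommGroup F] [CovariantClass F F (· + ·) (· ≤ ·)] [Module ℝ F]
    (T : E →ₗ[ℝ] F)
    (hpos : ∀ x : E, 0 ≤ x → 0 ≤ T x)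
    (hip : ∀ u : E, 0 ≤ u → T '' Set.Icc 0 u = Set.Icc 0 (T u))
    (φ ψ : F →ₗ[ℝ] ℝ) (hφ : OrdBddFunctional φ) (hψ : OrdBddFunctional ψ) :
    ∀ u : E, 0 ≤ u →
      sSup (rkSet (φ.comp T) (ψ.comp T) u) = sSup (rkSet φ ψ (T u)) := by
  intro u hu
  congr 1
  unfold rkSet
  rw [← hip u hu, Set.image_image]
  simp [map_sub]
end

section
/- Let E and F be vector lattices with E Archimedean, and let T : E → F be a surjective, order continuous lattice homomorphism. If φ is an order bounded linear functional on F such that φ ∘ T is order continuous on E, then φ is order continuous on F. -/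
section Defs

variable {X Y : Type*} [Lattice X] [AddCommGroup X] [Module ℝ X]
  [Lattice Y] [AddCommGroup Y] [Module ℝ Y]

/-- A linear functional is order continuous if `inf |φ[A]| = 0` whenever `A` is a
(nonempty) downward directed set with infimum `0`. -/
def OrdContFunctional (φ : X →ₗ[ℝ] ℝ) : Prop :=
  ∀ A : Set X, A.Nonempty → DirectedOn (· ≥ ·) A → IsGLB A 0 →
    IsGLB ((fun u => |φ u|) '' A) 0

/-- An order continuous operator: it maps (nonempty, downward directed) sets
decreasing to `0` to sets with infimum `0`. -/
def OrdContOperator (T : X →ₗ[ℝ] Y) : Prop :=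
  ∀ A : Set X, A.Nonempty → DirectedOn (· ≥ ·) A → IsGLB A 0 →
    IsGLB (T '' A) 0

end Defs

/-- Let `E` be Archimedean and `T : E → F` a surjective, order
continuous lattice homomorphism.  If `φ` is an order bounded functional on `F` with
`φ ∘ T` order continuous, then `φ` is order continuous. -/
theorem ordCont_of_comp_surjective_latticeHom
    {E F : Type*}
    [Lattice E] [AddCommGroup E] [CovariantClass E E (· + ·) (· ≤ ·)] [Module ℝ E]
    [Lattice F] [AddCommGroup F] [CovariantClass F F (· + ·) (· ≤ ·)] [Module ℝ F]
    (harch : ∀ u v : E, 0 ≤ u → 0 ≤ v → (∀ n : ℕ, n • u ≤ v) → u = 0)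
    (T : E →ₗ[ℝ] F)
    (hlat : ∀ x y : E, T (x ⊔ y) = T x ⊔ T y)
    (hsurj : Function.Surjective T)
    (hTcont : OrdContOperator T)
    (φ : F →ₗ[ℝ] ℝ) (hφ : OrdBddFunctional φ)
    (hcomp : OrdContFunctional (φ.comp T)) :
    OrdContFunctional φ := by
  intro A hAne hAdir hAglb
  have hApos : ∀ a ∈ A, (0 : F) ≤ a := fun a ha => hAglb.1 ha
  have hmono : ∀ x y : E, x ≤ y → T x ≤ T y := by
    intro x y hxy
    have h := hlat x y
    rw [sup_eq_right.2 hxy] at h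
    exact h ▸ le_sup_left
  have hinf : ∀ x y : E, T (x ⊓ y) = T x ⊓ T y := by
    intro x y
    have h1 : x ⊓ y = -(-x ⊔ -y) := by rw [← neg_inf, neg_neg]
    rw [h1, map_neg, hlat, map_neg, map_neg, ← neg_inf, neg_neg]
  -- every element of A has a nonnegative preimage
  have hpre : ∀ a ∈ A, ∃ x : E, 0 ≤ x ∧ T x = a := by
    intro a ha
    obtain ⟨x, rfl⟩ := hsurj a
    refine ⟨x ⊔ 0, le_sup_right, ?_⟩
    rw [hlat, map_zero, sup_eq_left.2 (hApos _ ha)]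
  set B : Set E := {x : E | 0 ≤ x ∧ T x ∈ A} with hB
  have hBne : B.Nonempty := by
    obtain ⟨a, ha⟩ := hAne
    obtain ⟨x, hx0, hxa⟩ := hpre a ha
    exact ⟨x, hx0, hxa ▸ ha⟩
  have hBdir : DirectedOn (· ≥ ·) B := by
    rintro x ⟨hx0, hxA⟩ y ⟨hy0, hyA⟩
    obtain ⟨c, hcA, hc1, hc2⟩ := hAdir _ hxA _ hyA
    obtain ⟨z, hz0, hzc⟩ := hpre c hcA
    refine ⟨z ⊓ x ⊓ y, ⟨le_inf (le_inf hz0 hx0) hy0, ?_⟩, inf_le_left.trans inf_le_right, inf_le_right⟩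
    rw [hinf, hinf, hzc, inf_eq_left.2 hc1, inf_eq_left.2 hc2]
    exact hcA
  have hBglb : IsGLB B 0 := by
    constructor
    · exact fun x hx => hx.1
    · intro u hu
      set w : E := u ⊔ 0 with hw
      have hw0 : (0 : E) ≤ w := le_sup_right
      have hwle : ∀ x ∈ B, w ≤ x := fun x hx => sup_le (hu hx) hx.1
      have hTw : T w = 0 := by
        refine le_antisymm (hAglb.2 ?_) ?_
        · intro a ha
          obtain ⟨x, hx0, hxa⟩ := hpre a ha
          exact hxa ▸ hmono _ _ (hwle x ⟨hx0, hxa ▸ ha⟩)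
        · have := hmono 0 w hw0
          rwa [map_zero] at this
      have hsub : ∀ x ∈ B, x - w ∈ B := by
        intro x hx
        refine ⟨sub_nonneg.2 (hwle x hx), ?_⟩
        rw [map_sub, hTw, sub_zero]
        exact hx.2
      have hind : ∀ n : ℕ, ∀ x ∈ B, n • w ≤ x := by
        intro n
        induction n with
        | zero => intro x hx; simpa using hx.1
        | succ n ih =>
          intro x hx
          have h1 := ih (x - w) (hsub x hx)
          have h2 : (n + 1) • w = n • w + w := succ_nsmul w n
          rw [h2]
          calc n • w + w ≤ (x - w) + w := add_le_add_left h1 w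
            _ = x := by abel
      obtain ⟨x₀, hx₀⟩ := hBne
      have hw0' : w = 0 := harch w x₀ hw0 hx₀.1 (fun n => hind n x₀ hx₀)
      calc u ≤ w := le_sup_left
        _ = 0 := hw0'
  have hkey := hcomp B hBne hBdir hBglb
  constructor
  · rintro r ⟨a, _, rfl⟩
    exact abs_nonneg _
  · intro b hb
    refine hkey.2 ?_
    rintro r ⟨x, hx, rfl⟩
    exact hb ⟨T x, hx.2, rfl⟩
end

section
/- Let E and F be vector lattices and T : E → F a surjective lattice homomorphism. Then the range of the order adjoint T^∼ : F^∼ → E^∼ equals the annihilator of ker T, i.e., T^∼[F^∼] = {φ ∈ E^∼ : φ(u) = 0 for all u ∈ ker T}. -/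
/-- If `T : E → F` is a surjective lattice homomorphism, then the range
of the order adjoint `T^∼ : F^∼ → E^∼` equals the annihilator of `ker T`; i.e. an
order bounded functional `ψ` on `E` is of the form `φ ∘ T` with `φ ∈ F^∼` if and only
if `ψ` vanishes on `ker T`. -/
theorem range_orderAdjoint_eq_annihilator_ker
    {E F : Type*}
    [Lattice E] [AddCommGroup E] [CovariantClass E E (· + ·) (· ≤ ·)] [Module ℝ E]
    [Lattice F] [AddCommGroup F] [CovariantClass F F (· + ·) (· ≤ ·)] [Module ℝ F]
    (T : E →ₗ[ℝ] F)
    (hlat : ∀ x y : E, T (x ⊔ y) = T x ⊔ T y)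
    (hsurj : Function.Surjective T) :
    ∀ ψ : E →ₗ[ℝ] ℝ, OrdBddFunctional ψ →
      ((∃ φ : F →ₗ[ℝ] ℝ, OrdBddFunctional φ ∧ ψ = φ.comp T) ↔
        ∀ u ∈ LinearMap.ker T, ψ u = 0) := by
  intro psi hpsi
  constructor
  · rintro ⟨φ, hφ, rfl⟩ u hu
    have : T u = 0 := LinearMap.mem_ker.mp hu
    simp [LinearMap.comp_apply, this]
  · intro hker
    have key : ∀ x y : E, T x = T y → psi x = psi y := by
      intro x y h
      have h0 : psi (x - y) = 0 := hker _ (by simp [LinearMap.mem_ker, h])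
      rw [map_sub] at h0; linarith
    set s := Function.surjInv hsurj with hs_def
    have hs : ∀ y, T (s y) = y := Function.surjInv_eq hsurj
    let φ : F →ₗ[ℝ] ℝ :=
      { toFun := fun y => psi (s y)
        map_add' := fun y z => by
          rw [← map_add psi]
          exact key _ _ (by simp [hs, map_add])
        map_smul' := fun c y => by
          simp only [RingHom.id_apply]
          rw [← map_smul psi]
          exact key _ _ (by simp [hs, map_smul]) }
    have hcomp : psi = φ.comp T := by
      ext x
      exact key x (s (T x)) (by rw [hs])
    refine ⟨φ, ?_, hcomp⟩
    have hinf : ∀ x y : E, T (x ⊓ y) = T x ⊓ T y := by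
      intro x y
      have h1 : x ⊓ y = -((-x) ⊔ (-y)) := by rw [← neg_inf, neg_neg]
      have h2 : T x ⊓ T y = -((-(T x)) ⊔ (-(T y))) := by rw [← neg_inf, neg_neg]
      rw [h1, h2, map_neg, hlat, map_neg, map_neg]
    intro w hw
    obtain ⟨u, hu⟩ := hsurj w
    have hsub : φ '' Set.Icc 0 w ⊆ psi '' Set.Icc 0 (u ⊔ 0) := by
      rintro _ ⟨v, hv, rfl⟩
      obtain ⟨x, hx⟩ := hsurj v
      refine ⟨(x ⊔ 0) ⊓ (u ⊔ 0), ⟨le_inf le_sup_right le_sup_right, inf_le_right⟩, ?_⟩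
      have hT : T ((x ⊔ 0) ⊓ (u ⊔ 0)) = v := by
        rw [hinf, hlat, hlat, hx, hu, map_zero, sup_eq_left.mpr hv.1,
          sup_eq_left.mpr (hv.1.trans hv.2), inf_eq_left.mpr hv.2]
      exact key _ _ (by rw [hT, hs])
    obtain ⟨ha, hb⟩ := hpsi (u ⊔ 0) le_sup_right
    exact ⟨ha.mono hsub, hb.mono hsub⟩
end

section
/- Let (E_α)_{α∈I} be a family of vector lattices. The order continuous dual of the product ∏ E_α is lattice isomorphic to the direct sum ⊕ (E_α)^∼_n of the order continuous duals, via the map φ ↦ (ι_α^∼ φ)_{α∈I}, where ι_α : E_α → ∏ E_α is the canonical injection. -/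
section Defs

variable {X : Type*} [Lattice X] [AddCommGroup X] [Module ℝ X]

/-- A positive linear functional. -/
def PosFunctional (φ : X →ₗ[ℝ] ℝ) : Prop := ∀ u : X, 0 ≤ u → 0 ≤ φ u

end Defs


set_option linter.unusedSectionVars false
section Aux

variable {X : Type*} [Lattice X] [AddCommGroup X]
  [CovariantClass X X (· + ·) (· ≤ ·)] [Module ℝ X]

lemma ordBdd_neg {φ : X →ₗ[ℝ] ℝ} (h : OrdBddFunctional φ) : OrdBddFunctional (-φ) := by
  intro u hu
  obtain ⟨⟨M, hM⟩, ⟨m, hm⟩⟩ := h u hu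
  constructor
  · refine ⟨-m, ?_⟩
    rintro _ ⟨v, hv, rfl⟩
    have := hm ⟨v, hv, rfl⟩
    simp only [LinearMap.neg_apply]
    linarith
  · refine ⟨-M, ?_⟩
    rintro _ ⟨v, hv, rfl⟩
    have := hM ⟨v, hv, rfl⟩
    simp only [LinearMap.neg_apply]
    linarith

lemma ordCont_neg {φ : X →ₗ[ℝ] ℝ} (h : OrdContFunctional φ) : OrdContFunctional (-φ) := by
  intro A hne hdir hglb
  have heq : (fun u => |(-φ) u|) = fun u => |φ u| := by
    ext u; simp
  rw [heq]
  exact h A hne hdir hglb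

lemma ordBdd_zero : OrdBddFunctional (0 : X →ₗ[ℝ] ℝ) := by
  intro u hu
  constructor
  · exact ⟨0, by rintro _ ⟨v, hv, rfl⟩; simp⟩
  · exact ⟨0, by rintro _ ⟨v, hv, rfl⟩; simp⟩

lemma ordCont_zero : OrdContFunctional (0 : X →ₗ[ℝ] ℝ) := by
  intro A hne hdir hglb
  constructor
  · rintro _ ⟨a, ha, rfl⟩; simp
  · intro c hc
    obtain ⟨a, ha⟩ := hne
    have := hc ⟨a, ha, rfl⟩
    simpa using this

lemma ordBdd_add {φ ψ : X →ₗ[ℝ] ℝ} (hφ : OrdBddFunctional φ) (hψ : OrdBddFunctional ψ) :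
    OrdBddFunctional (φ + ψ) := by
  intro u hu
  obtain ⟨⟨M1, hM1⟩, ⟨m1, hm1⟩⟩ := hφ u hu
  obtain ⟨⟨M2, hM2⟩, ⟨m2, hm2⟩⟩ := hψ u hu
  constructor
  · refine ⟨M1 + M2, ?_⟩
    rintro _ ⟨v, hv, rfl⟩
    have h1 := hM1 ⟨v, hv, rfl⟩
    have h2 := hM2 ⟨v, hv, rfl⟩
    simp only [LinearMap.add_apply]
    linarith
  · refine ⟨m1 + m2, ?_⟩
    rintro _ ⟨v, hv, rfl⟩
    have h1 := hm1 ⟨v, hv, rfl⟩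
    have h2 := hm2 ⟨v, hv, rfl⟩
    simp only [LinearMap.add_apply]
    linarith

/-- Key lemma: an order bounded, order continuous functional is "uniformly small from above"
on order intervals below suitable elements of a set decreasing to `0`. -/
lemma key_small {θ : X →ₗ[ℝ] ℝ} (hb : OrdBddFunctional θ) (hc : OrdContFunctional θ)
    {A : Set X} (hne : A.Nonempty) (hdir : DirectedOn (· ≥ ·) A) (hglb : IsGLB A 0)
    {ε : ℝ} (hε : 0 < ε) : ∃ a ∈ A, ∀ v ∈ Set.Icc 0 a, θ v ≤ ε := by
  obtain ⟨a₀, ha₀⟩ := hne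
  have h0A : ∀ a ∈ A, 0 ≤ a := fun a ha => hglb.1 ha
  have h0a₀ : 0 ≤ a₀ := h0A a₀ ha₀
  set δ := ε / 3 with hδdef
  have hδ : 0 < δ := by positivity
  set S₀ := θ '' Set.Icc 0 a₀ with hS₀
  have hS₀ne : S₀.Nonempty := ⟨θ 0, ⟨0, ⟨le_rfl, h0a₀⟩, rfl⟩⟩
  have hS₀bdd : BddAbove S₀ := (hb a₀ h0a₀).1
  set p₀ := sSup S₀ with hp₀
  have hle_p₀ : ∀ v ∈ Set.Icc 0 a₀, θ v ≤ p₀ := fun v hv => le_csSup hS₀bdd ⟨v, hv, rfl⟩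
  -- pick a near-maximizer v₀
  obtain ⟨y, ⟨v₀, hv₀, rfl⟩, hy⟩ := exists_lt_of_lt_csSup hS₀ne (show p₀ - δ < p₀ by linarith)
  -- the set B = v₀ ⊓ (A ∩ below a₀)
  set A' := {a ∈ A | a ≤ a₀} with hA'
  have hA'ne : A'.Nonempty := ⟨a₀, ha₀, le_rfl⟩
  have hA'lb : ∀ c ∈ lowerBounds A', c ≤ 0 := by
    intro c hcl
    refine hglb.2 ?_
    intro a ha
    obtain ⟨d, hd, hda, hda₀⟩ := hdir a ha a₀ ha₀
    exact le_trans (hcl ⟨hd, hda₀⟩) hda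
  set B := (fun a => v₀ ⊓ a) '' A' with hB
  have hBne : B.Nonempty := hA'ne.image _
  have hBdir : DirectedOn (· ≥ ·) B := by
    rintro _ ⟨a, ⟨haA, haa₀⟩, rfl⟩ _ ⟨b, ⟨hbA, hba₀⟩, rfl⟩
    obtain ⟨c, hc, hca, hcb⟩ := hdir a haA b hbA
    exact ⟨v₀ ⊓ c, ⟨c, ⟨hc, le_trans hca haa₀⟩, rfl⟩,
      inf_le_inf_left _ hca, inf_le_inf_left _ hcb⟩
  have hBglb : IsGLB B 0 := by
    constructor
    · rintro _ ⟨a, ⟨haA, _⟩, rfl⟩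
      exact le_inf hv₀.1 (h0A a haA)
    · intro c hcl
      refine hA'lb c ?_
      intro a ha
      exact le_trans (hcl ⟨a, ha, rfl⟩) inf_le_right
  -- order continuity gives a₁
  have hgB := hc B hBne hBdir hBglb
  have : ∃ b ∈ B, |θ b| < δ := by
    by_contra hcon
    push_neg at hcon
    have : δ ≤ 0 := hgB.2 (by rintro _ ⟨b, hb', rfl⟩; exact hcon b hb')
    linarith
  obtain ⟨_, ⟨a₁, ⟨ha₁A, ha₁a₀⟩, rfl⟩, hsmall⟩ := this
  refine ⟨a₁, ha₁A, ?_⟩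
  intro v hv
  -- first: θ u ≤ 2δ for u ∈ [0, v₀ ⊓ a₁]
  have hstep : ∀ u, 0 ≤ u → u ≤ v₀ ⊓ a₁ → θ u ≤ 2 * δ := by
    intro u hu0 hu
    have hz : v₀ - v₀ ⊓ a₁ + u ∈ Set.Icc 0 a₀ := by
      constructor
      · have h1 : (0 : X) ≤ v₀ - v₀ ⊓ a₁ := by
          rw [sub_nonneg]; exact inf_le_left
        calc (0 : X) = 0 + 0 := by rw [add_zero]
        _ ≤ (v₀ - v₀ ⊓ a₁) + u := add_le_add h1 hu0
      · have : v₀ - v₀ ⊓ a₁ + u ≤ v₀ - v₀ ⊓ a₁ + v₀ ⊓ a₁ := add_le_add le_rfl hu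
        rw [sub_add_cancel] at this
        exact le_trans this hv₀.2
    have h1 := hle_p₀ _ hz
    rw [map_add, map_sub] at h1
    have h2 : |θ (v₀ ⊓ a₁)| < δ := hsmall
    have h3 : θ (v₀ ⊓ a₁) ≤ δ := le_trans (le_abs_self _) h2.le
    -- θ v₀ - θ(v₀⊓a₁) + θ u ≤ p₀ < θ v₀ + δ
    have h4 : p₀ < θ v₀ + δ := by linarith
    linarith
  -- now for v ∈ [0, a₁]
  have hvsup : v ⊔ v₀ ∈ Set.Icc 0 a₀ := by
    constructor
    · exact le_trans hv.1 le_sup_left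
    · exact sup_le (le_trans hv.2 ha₁a₀) hv₀.2
  have hkey : θ (v ⊓ v₀) + θ (v ⊔ v₀) = θ v + θ v₀ := by
    rw [← map_add, ← map_add, inf_add_sup]
  have h5 : θ (v ⊔ v₀) ≤ p₀ := hle_p₀ _ hvsup
  have h6 : θ (v ⊓ v₀) ≤ 2 * δ := by
    refine hstep _ (le_inf hv.1 hv₀.1) (le_inf inf_le_right (le_trans inf_le_left hv.2))
  have h7 : p₀ < θ v₀ + δ := by linarith
  have : θ v ≤ 3 * δ := by linarith
  calc θ v ≤ 3 * δ := this
  _ = ε := by rw [hδdef]; ring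

lemma ordCont_add {φ ψ : X →ₗ[ℝ] ℝ} (hbφ : OrdBddFunctional φ) (hcφ : OrdContFunctional φ)
    (hbψ : OrdBddFunctional ψ) (hcψ : OrdContFunctional ψ) :
    OrdContFunctional (φ + ψ) := by
  intro A hne hdir hglb
  constructor
  · rintro _ ⟨a, ha, rfl⟩
    exact abs_nonneg _
  · intro c hc
    by_contra hc0
    push_neg at hc0
    have hc4 : 0 < c / 4 := by linarith
    obtain ⟨a₁, ha₁, h1⟩ := key_small hbφ hcφ hne hdir hglb hc4
    obtain ⟨a₂, ha₂, h2⟩ := key_small (ordBdd_neg hbφ) (ordCont_neg hcφ) hne hdir hglb hc4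
    obtain ⟨a₃, ha₃, h3⟩ := key_small hbψ hcψ hne hdir hglb hc4
    obtain ⟨a₄, ha₄, h4⟩ := key_small (ordBdd_neg hbψ) (ordCont_neg hcψ) hne hdir hglb hc4
    obtain ⟨b₁, hb₁, hb₁₁, hb₁₂⟩ := hdir a₁ ha₁ a₂ ha₂
    obtain ⟨b₂, hb₂, hb₂₁, hb₂₂⟩ := hdir a₃ ha₃ a₄ ha₄
    obtain ⟨a, haA, ha₁', ha₂'⟩ := hdir b₁ hb₁ b₂ hb₂
    have h0a : 0 ≤ a := hglb.1 haA
    have e1 : φ a ≤ c / 4 := h1 a ⟨h0a, le_trans ha₁' hb₁₁⟩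
    have e2 : (-φ) a ≤ c / 4 := h2 a ⟨h0a, le_trans ha₁' hb₁₂⟩
    have e3 : ψ a ≤ c / 4 := h3 a ⟨h0a, le_trans ha₂' hb₂₁⟩
    have e4 : (-ψ) a ≤ c / 4 := h4 a ⟨h0a, le_trans ha₂' hb₂₂⟩
    rw [LinearMap.neg_apply] at e2 e4
    have hca : c ≤ |(φ + ψ) a| := hc ⟨a, haA, rfl⟩
    rw [LinearMap.add_apply] at hca
    have : |φ a + ψ a| ≤ c / 2 := abs_le.2 ⟨by linarith, by linarith⟩
    linarith

end Aux

set_option linter.unusedSectionVars false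
section ProdAux

lemma cast_w_eq {I : Type*} {E : I → Type*} {g : ℕ → I} (w : ∀ n, E (g n)) {m n : ℕ}
    (h : m = n) (hm : g m = g n) : (hm ▸ w m : E (g n)) = w n := by subst h; rfl

lemma cast_nonneg_aux {I : Type*} {E : I → Type*} [∀ i, Zero (E i)] [∀ i, LE (E i)]
    {i j : I} (h : i = j) {a : E i} (ha : 0 ≤ a) : (0 : E j) ≤ h ▸ a := by subst h; exact ha

variable {I : Type*} [DecidableEq I] {E : I → Type*}
    [∀ i, Lattice (E i)] [∀ i, AddCommGroup (E i)]
    [∀ i, CovariantClass (E i) (E i) (· + ·) (· ≤ ·)] [∀ i, Module ℝ (E i)]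

instance piCovariant : CovariantClass (∀ i, E i) (∀ i, E i) (· + ·) (· ≤ ·) :=
  ⟨fun a _ _ h i => add_le_add (le_refl (a i)) (h i)⟩

lemma pi_single_nonneg {i : I} {a : E i} (h : 0 ≤ a) : 0 ≤ (Pi.single i a : ∀ j, E j) := by
  intro j
  rcases eq_or_ne j i with rfl | hj
  · rw [Pi.single_eq_same]; exact h
  · rw [Pi.single_eq_of_ne hj]; exact (Pi.zero_apply j).le

lemma pi_single_mono {i : I} {a b : E i} (h : a ≤ b) :
    (Pi.single i a : ∀ j, E j) ≤ Pi.single i b := by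
  intro j
  rcases eq_or_ne j i with rfl | hj
  · rw [Pi.single_eq_same, Pi.single_eq_same]; exact h
  · rw [Pi.single_eq_of_ne hj, Pi.single_eq_of_ne hj]

lemma trunc_apply (x : ∀ i, E i) (s : Finset I) (k : I) :
    (x - ∑ j ∈ s, Pi.single j (x j)) k = if k ∈ s then 0 else x k := by
  rw [Pi.sub_apply, Finset.sum_apply, Finset.sum_pi_single]
  split_ifs <;> simp

lemma trunc_glb (x : ∀ i, E i) (hx : 0 ≤ x) :
    (Set.range fun s : Finset I => x - ∑ j ∈ s, Pi.single j (x j)).Nonempty ∧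
    DirectedOn (· ≥ ·) (Set.range fun s : Finset I => x - ∑ j ∈ s, Pi.single j (x j)) ∧
    IsGLB (Set.range fun s : Finset I => x - ∑ j ∈ s, Pi.single j (x j)) 0 := by
  refine ⟨⟨_, Set.mem_range_self ∅⟩, ?_, ?_, ?_⟩
  · rintro _ ⟨s, rfl⟩ _ ⟨t, rfl⟩
    refine ⟨_, Set.mem_range_self (s ∪ t), ?_, ?_⟩
    · intro k
      dsimp only
      rw [trunc_apply, trunc_apply]
      by_cases hks : k ∈ s
      · rw [if_pos hks, if_pos (Finset.mem_union_left _ hks)]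
      · rw [if_neg hks]
        split_ifs with h
        · exact hx k
        · exact le_rfl
    · intro k
      dsimp only
      rw [trunc_apply, trunc_apply]
      by_cases hkt : k ∈ t
      · rw [if_pos hkt, if_pos (Finset.mem_union_right _ hkt)]
      · rw [if_neg hkt]
        split_ifs with h
        · exact hx k
        · exact le_rfl
  · rintro _ ⟨s, rfl⟩
    intro k
    dsimp only
    rw [trunc_apply, Pi.zero_apply]
    split_ifs with h
    · exact le_rfl
    · exact hx k
  · intro c hcl
    intro k
    have := hcl (Set.mem_range_self ({k} : Finset I)) k
    rwa [trunc_apply, if_pos (Finset.mem_singleton_self k)] at this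

lemma isGLB_proj_image {A : Set (∀ i, E i)} (hglb : IsGLB A 0) (i : I) :
    IsGLB ((fun x => x i) '' A) 0 := by
  constructor
  · rintro _ ⟨a, ha, rfl⟩
    exact hglb.1 ha i
  · intro c hcl
    have hy : (Pi.single i (c ⊔ 0) : ∀ j, E j) ∈ lowerBounds A := by
      intro a ha j
      rcases eq_or_ne j i with rfl | hj
      · rw [Pi.single_eq_same]
        exact sup_le (hcl ⟨a, ha, rfl⟩) (hglb.1 ha j)
      · rw [Pi.single_eq_of_ne hj]
        exact hglb.1 ha j
    have := hglb.2 hy i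
    rw [Pi.single_eq_same] at this
    exact le_trans le_sup_left this

lemma isGLB_single_image {i : I} {A : Set (E i)} (hne : A.Nonempty) (hglb : IsGLB A 0) :
    IsGLB ((fun a => (Pi.single i a : ∀ j, E j)) '' A) 0 := by
  constructor
  · rintro _ ⟨a, ha, rfl⟩
    exact pi_single_nonneg (hglb.1 ha)
  · intro y hy
    obtain ⟨a₀, ha₀⟩ := hne
    intro j
    rcases eq_or_ne j i with rfl | hj
    · have hlb : y j ∈ lowerBounds A := by
        intro a ha
        have := hy ⟨a, ha, rfl⟩ j
        dsimp only at this
        rwa [Pi.single_eq_same] at this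
      exact hglb.2 hlb
    · have := hy ⟨a₀, ha₀, rfl⟩ j
      dsimp only at this
      rw [Pi.single_eq_of_ne hj] at this
      rw [Pi.zero_apply]
      exact this

end ProdAux

/-- For a family `(E_α)` of vector lattices, the order continuous dual of
`∏ E_α` is lattice isomorphic to the direct sum `⊕ (E_α)^∼_n` of the order continuous
duals via `φ ↦ (φ ∘ ι_α)_α`, where `ι_α` is the canonical injection.  Stated
concretely: the map is injective; it takes values in the direct sum (finitely many
nonzero coordinates, each coordinate order bounded and order continuous); it is onto
the direct sum; and it is bipositive (hence, being linear, a lattice isomorphism). -/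
theorem orderContinuousDual_of_product
    {I : Type*} [DecidableEq I] {E : I → Type*}
    [∀ i, Lattice (E i)] [∀ i, AddCommGroup (E i)]
    [∀ i, CovariantClass (E i) (E i) (· + ·) (· ≤ ·)] [∀ i, Module ℝ (E i)] :
    -- injectivity
    (∀ φ ψ : (∀ i, E i) →ₗ[ℝ] ℝ,
      OrdBddFunctional φ → OrdContFunctional φ →
      OrdBddFunctional ψ → OrdContFunctional ψ →
      (∀ i, φ.comp (LinearMap.single ℝ E i) = ψ.comp (LinearMap.single ℝ E i)) →
      φ = ψ) ∧
    -- the map lands in the direct sum of the order continuous duals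
    (∀ φ : (∀ i, E i) →ₗ[ℝ] ℝ, OrdBddFunctional φ → OrdContFunctional φ →
      {i : I | φ.comp (LinearMap.single ℝ E i) ≠ 0}.Finite ∧
      ∀ i, OrdBddFunctional (φ.comp (LinearMap.single ℝ E i)) ∧
        OrdContFunctional (φ.comp (LinearMap.single ℝ E i))) ∧
    -- surjectivity onto the direct sum
    (∀ ψ : ∀ i, E i →ₗ[ℝ] ℝ,
      (∀ i, OrdBddFunctional (ψ i) ∧ OrdContFunctional (ψ i)) →
      {i : I | ψ i ≠ 0}.Finite →
      ∃ φ : (∀ i, E i) →ₗ[ℝ] ℝ, OrdBddFunctional φ ∧ OrdContFunctional φ ∧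
        ∀ i, φ.comp (LinearMap.single ℝ E i) = ψ i) ∧
    -- bipositivity
    (∀ φ : (∀ i, E i) →ₗ[ℝ] ℝ, OrdBddFunctional φ → OrdContFunctional φ →
      (PosFunctional φ ↔ ∀ i, PosFunctional (φ.comp (LinearMap.single ℝ E i)))) := by
  classical
  refine ⟨?_, ?_, ?_, ?_⟩
  -- 1. injectivity
  · intro φ ψ hbφ hcφ hbψ hcψ hagree
    have hχb : OrdBddFunctional (φ + -ψ) := ordBdd_add hbφ (ordBdd_neg hbψ)
    have hχc : OrdContFunctional (φ + -ψ) :=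
      ordCont_add hbφ hcφ (ordBdd_neg hbψ) (ordCont_neg hcψ)
    have hsingle : ∀ (j : I) (v : E j), (φ + -ψ) (Pi.single j v) = 0 := by
      intro j v
      have h := LinearMap.congr_fun (hagree j) v
      simp only [LinearMap.comp_apply, LinearMap.coe_single] at h
      simp only [LinearMap.add_apply, LinearMap.neg_apply, h, add_neg_cancel]
    have hzero : ∀ x : ∀ i, E i, 0 ≤ x → (φ + -ψ) x = 0 := by
      intro x hx
      obtain ⟨hAne, hAdir, hAglb⟩ := trunc_glb x hx
      have hg := hχc _ hAne hAdir hAglb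
      have hconst : ∀ u ∈ (Set.range fun s : Finset I => x - ∑ j ∈ s, Pi.single j (x j)),
          (φ + -ψ) u = (φ + -ψ) x := by
        rintro _ ⟨s, rfl⟩
        rw [map_sub, map_sum]
        rw [Finset.sum_congr rfl (fun j _ => hsingle j (x j)), Finset.sum_const_zero, sub_zero]
      have hlb : |(φ + -ψ) x| ∈ lowerBounds ((fun u => |(φ + -ψ) u|) ''
          (Set.range fun s : Finset I => x - ∑ j ∈ s, Pi.single j (x j))) := by
        rintro _ ⟨u, hu, rfl⟩
        dsimp only
        rw [hconst u hu]
      have h1 := hg.2 hlb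
      have h2 := abs_nonneg ((φ + -ψ) x)
      exact abs_eq_zero.mp (le_antisymm h1 h2)
    have hχ : φ + -ψ = 0 := by
      apply LinearMap.ext
      intro x
      have hd : posPart x - negPart x = x := posPart_sub_negPart x
      have h3 : (φ + -ψ) x = (φ + -ψ) (posPart x) - (φ + -ψ) (negPart x) := by
        rw [← map_sub, hd]
      rw [LinearMap.zero_apply, h3, hzero _ (posPart_nonneg x),
        hzero _ (negPart_nonneg x), sub_zero]
    rw [← sub_eq_add_neg] at hχ
    exact sub_eq_zero.mp hχ
  -- 2. lands in the direct sum
  · intro φ hb hc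
    constructor
    · -- finiteness of the support
      by_contra hinf
      have hinf' : {i : I | φ.comp (LinearMap.single ℝ E i) ≠ 0}.Infinite := hinf
      set e := Set.Infinite.natEmbedding _ hinf' with hedef
      set g : ℕ → I := fun n => (e n : I) with hgdef
      have hg : Function.Injective g := fun m n hmn =>
        e.injective (Subtype.coe_injective hmn)
      have hne0 : ∀ n, φ.comp (LinearMap.single ℝ E (g n)) ≠ 0 := fun n => (e n).2
      have hv : ∀ n, ∃ v : E (g n), φ.comp (LinearMap.single ℝ E (g n)) v ≠ 0 := by
        intro n
        by_contra h
        push_neg at h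
        exact hne0 n (LinearMap.ext fun v => by rw [h v, LinearMap.zero_apply])
      choose v hv using hv
      set w : ∀ n, E (g n) :=
        fun n => (((n : ℝ) + 1) / φ.comp (LinearMap.single ℝ E (g n)) (v n)) • v n with hwdef
      have hw : ∀ n, φ.comp (LinearMap.single ℝ E (g n)) (w n) = (n : ℝ) + 1 := by
        intro n
        rw [hwdef]
        rw [map_smul, smul_eq_mul, div_mul_cancel₀ _ (hv n)]
      obtain ⟨x, hxdef⟩ : ∃ x : ∀ i, E i,
          x = fun i => if h : ∃ n, g n = i then h.choose_spec ▸ |w h.choose| else 0 := ⟨_, rfl⟩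
      have hx0 : 0 ≤ x := by
        intro i
        rw [hxdef]
        dsimp only
        rw [Pi.zero_apply]
        split_ifs with h
        · exact cast_nonneg_aux h.choose_spec (abs_nonneg _)
        · exact le_rfl
      have hxg : ∀ n, x (g n) = |w n| := by
        intro n
        have hex : ∃ m, g m = g n := ⟨n, rfl⟩
        rw [hxdef]
        dsimp only
        rw [dif_pos hex]
        exact cast_w_eq (fun m => |w m|) (hg hex.choose_spec) hex.choose_spec
      obtain ⟨⟨M, hM⟩, ⟨m₀, hm₀⟩⟩ := hb x hx0
      have hbound : ∀ n : ℕ, (n : ℝ) + 1 ≤ M - m₀ := by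
        intro n
        have hple : posPart (w n) ≤ |w n| := by
          rw [← posPart_add_negPart (w n)]
          exact le_add_of_nonneg_right (negPart_nonneg _)
        have hnle : negPart (w n) ≤ |w n| := by
          rw [← posPart_add_negPart (w n)]
          exact le_add_of_nonneg_left (posPart_nonneg _)
        have hp : (Pi.single (g n) (posPart (w n)) : ∀ i, E i) ∈ Set.Icc 0 x := by
          refine ⟨pi_single_nonneg (posPart_nonneg _), ?_⟩
          intro j
          rcases eq_or_ne j (g n) with rfl | hj
          · rw [Pi.single_eq_same, hxg n]; exact hple
          · rw [Pi.single_eq_of_ne hj]; exact hx0 j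
        have hq : (Pi.single (g n) (negPart (w n)) : ∀ i, E i) ∈ Set.Icc 0 x := by
          refine ⟨pi_single_nonneg (negPart_nonneg _), ?_⟩
          intro j
          rcases eq_or_ne j (g n) with rfl | hj
          · rw [Pi.single_eq_same, hxg n]; exact hnle
          · rw [Pi.single_eq_of_ne hj]; exact hx0 j
        have h1 : φ (Pi.single (g n) (posPart (w n))) ≤ M := hM ⟨_, hp, rfl⟩
        have h2 : m₀ ≤ φ (Pi.single (g n) (negPart (w n))) := hm₀ ⟨_, hq, rfl⟩
        have h3 : φ.comp (LinearMap.single ℝ E (g n)) (w n)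
            = φ.comp (LinearMap.single ℝ E (g n)) (posPart (w n))
              - φ.comp (LinearMap.single ℝ E (g n)) (negPart (w n)) := by
          rw [← map_sub, posPart_sub_negPart]
        have h4 := hw n
        rw [h3] at h4
        simp only [LinearMap.comp_apply, LinearMap.coe_single] at h4
        linarith
      obtain ⟨n, hn⟩ := exists_nat_gt (M - m₀)
      have := hbound n
      linarith
    · -- coordinate functionals are order bounded and order continuous
      intro i
      constructor
      · intro u hu
        have hsub : (φ.comp (LinearMap.single ℝ E i)) '' Set.Icc 0 u
            ⊆ φ '' Set.Icc 0 (Pi.single i u) := by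
          rintro _ ⟨t, ht, rfl⟩
          exact ⟨Pi.single i t, ⟨pi_single_nonneg ht.1, pi_single_mono ht.2⟩, rfl⟩
        obtain ⟨hA, hB⟩ := hb (Pi.single i u) (pi_single_nonneg hu)
        exact ⟨hA.mono hsub, hB.mono hsub⟩
      · intro A hne hdir hglb
        have himg : (fun t => |(φ.comp (LinearMap.single ℝ E i)) t|) '' A
            = (fun u => |φ u|) '' ((fun a => (Pi.single i a : ∀ j, E j)) '' A) := by
          rw [Set.image_image]
          rfl
        rw [himg]
        refine hc _ (hne.image _) ?_ (isGLB_single_image hne hglb)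
        rintro _ ⟨a, ha, rfl⟩ _ ⟨b, hb', rfl⟩
        obtain ⟨z, hz, hza, hzb⟩ := hdir a ha b hb'
        exact ⟨Pi.single i z, ⟨z, hz, rfl⟩, pi_single_mono hza, pi_single_mono hzb⟩
  -- 3. surjectivity
  · intro ψ hψ hfin
    have hsummand : ∀ i, OrdBddFunctional ((ψ i).comp (LinearMap.proj i)) ∧
        OrdContFunctional ((ψ i).comp (LinearMap.proj i)) := by
      intro i
      constructor
      · intro u hu
        have hsub : ((ψ i).comp (LinearMap.proj i)) '' Set.Icc 0 u
            ⊆ (ψ i) '' Set.Icc 0 (u i) := by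
          rintro _ ⟨t, ht, rfl⟩
          exact ⟨t i, ⟨ht.1 i, ht.2 i⟩, rfl⟩
        obtain ⟨hA, hB⟩ := (hψ i).1 (u i) (hu i)
        exact ⟨hA.mono hsub, hB.mono hsub⟩
      · intro A hne hdir hglb
        have himg : (fun t => |((ψ i).comp (LinearMap.proj i)) t|) '' A
            = (fun u => |ψ i u|) '' ((fun x => x i) '' A) := by
          rw [Set.image_image]
          rfl
        rw [himg]
        refine (hψ i).2 _ (hne.image _) ?_ (isGLB_proj_image hglb i)
        rintro _ ⟨a, ha, rfl⟩ _ ⟨b, hb', rfl⟩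
        obtain ⟨z, hz, hza, hzb⟩ := hdir a ha b hb'
        exact ⟨z i, ⟨z, hz, rfl⟩, hza i, hzb i⟩
    have hS := Finset.sum_induction (fun i => (ψ i).comp (LinearMap.proj i))
      (fun θ => OrdBddFunctional θ ∧ OrdContFunctional θ)
      (fun a b ha hb => ⟨ordBdd_add ha.1 hb.1, ordCont_add ha.1 ha.2 hb.1 hb.2⟩)
      ⟨ordBdd_zero, ordCont_zero⟩ (fun i (_ : i ∈ hfin.toFinset) => hsummand i)
    refine ⟨∑ i ∈ hfin.toFinset, (ψ i).comp (LinearMap.proj i), hS.1, hS.2, ?_⟩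
    intro i
    apply LinearMap.ext
    intro u
    simp only [LinearMap.comp_apply, LinearMap.coe_single, LinearMap.sum_apply,
      LinearMap.proj_apply]
    by_cases hi : i ∈ hfin.toFinset
    · rw [Finset.sum_eq_single i (fun j _ hji => by rw [Pi.single_eq_of_ne hji, map_zero])
        (fun h => absurd hi h)]
      rw [Pi.single_eq_same]
    · have h0 : ψ i = 0 := by
        by_contra h
        exact hi (hfin.mem_toFinset.mpr h)
      have hterms : ∀ j ∈ hfin.toFinset, ψ j ((Pi.single i u : ∀ k, E k) j) = 0 := by
        intro j hj
        have hji : j ≠ i := fun hji => hi (hji ▸ hj)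
        rw [Pi.single_eq_of_ne hji, map_zero]
      rw [Finset.sum_congr rfl hterms, Finset.sum_const_zero, h0, LinearMap.zero_apply]
  -- 4. bipositivity
  · intro φ hb hc
    constructor
    · intro hpos i u hu
      exact hpos _ (pi_single_nonneg hu)
    · intro hpos x hx
      obtain ⟨hAne, hAdir, hAglb⟩ := trunc_glb x hx
      have hg := hc _ hAne hAdir hAglb
      by_contra hneg
      push_neg at hneg
      have hsm : ∃ y ∈ (fun u => |φ u|) ''
          (Set.range fun s : Finset I => x - ∑ j ∈ s, Pi.single j (x j)), y < -(φ x) := by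
        by_contra hcon
        push_neg at hcon
        have := hg.2 (fun y hy => hcon y hy)
        linarith
      obtain ⟨_, ⟨_, ⟨s, rfl⟩, rfl⟩, hsmall⟩ := hsm
      have hsumpos : 0 ≤ φ (∑ j ∈ s, Pi.single j (x j)) := by
        rw [map_sum]
        exact Finset.sum_nonneg fun j _ => hpos j (x j) (hx j)
      have hdecomp : φ x = φ (x - ∑ j ∈ s, Pi.single j (x j))
          + φ (∑ j ∈ s, Pi.single j (x j)) := by
        rw [← map_add, sub_add_cancel]
      have habs := abs_lt.1 hsmall
      linarith [habs.1]
end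

section
/- Let ((E_α), (p_{β,α})) be an inverse system of vector lattices whose connecting maps are normal lattice homomorphisms, and let E ⊆ ∏ E_α be the inverse limit sublattice. If every E_α is Dedekind complete, then E is Dedekind complete. -/
/-- The set of threads of an inverse system `(E_α, p_{βα})` inside the product. -/
def threads {I : Type*} [Preorder I] {E : I → Type*}
    [∀ i, AddCommGroup (E i)] [∀ i, Module ℝ (E i)]
    (p : ∀ {i j : I}, i ≤ j → (E j →ₗ[ℝ] E i)) : Set (∀ i, E i) :=
  {u | ∀ (i j : I) (h : i ≤ j), p h (u j) = u i}

section Defs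

variable {X Y : Type*} [Lattice X] [AddCommGroup X] [Module ℝ X]
  [Lattice Y] [AddCommGroup Y] [Module ℝ Y]

/-- A normal lattice homomorphism: a lattice homomorphism preserving arbitrary
(existing) suprema and infima. -/
def IsNormalLatHom (T : X →ₗ[ℝ] Y) : Prop :=
  (∀ a b : X, T (a ⊔ b) = T a ⊔ T b) ∧
  (∀ (A : Set X) (m : X), IsGLB A m → IsGLB (T '' A) (T m)) ∧
  (∀ (A : Set X) (m : X), IsLUB A m → IsLUB (T '' A) (T m))

end Defs

/-- Let `((E_α), (p_{βα}))` be an inverse system of vector lattices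
whose connecting maps are normal lattice homomorphisms, and let `E ⊆ ∏ E_α` be the
inverse limit (thread) sublattice.  If every `E_α` is Dedekind complete, then `E` is
Dedekind complete: every nonempty subset of `E` bounded above in `E` has a least
upper bound within `E`. -/
theorem inverseLimit_dedekindComplete
    {I : Type*} [Preorder I] [IsDirected I (· ≤ ·)]
    {E : I → Type*} [∀ i, Lattice (E i)] [∀ i, AddCommGroup (E i)]
    [∀ i, CovariantClass (E i) (E i) (· + ·) (· ≤ ·)] [∀ i, Module ℝ (E i)]
    (p : ∀ {i j : I}, i ≤ j → (E j →ₗ[ℝ] E i))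
    (hpn : ∀ {i j : I} (h : i ≤ j), IsNormalLatHom (p h))
    (hpcomp : ∀ {i j k : I} (hij : i ≤ j) (hjk : j ≤ k) (x : E k),
      p hij (p hjk x) = p (hij.trans hjk) x)
    (hDC : ∀ (i : I) (A : Set (E i)), A.Nonempty → BddAbove A → ∃ m, IsLUB A m) :
    ∀ A : Set (∀ i, E i), A ⊆ threads p → A.Nonempty →
      (∃ b ∈ threads p, ∀ a ∈ A, a ≤ b) →
      ∃ m ∈ threads p, (∀ a ∈ A, a ≤ m) ∧
        ∀ b ∈ threads p, (∀ a ∈ A, a ≤ b) → m ≤ b := by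
  intro A hA hne hbdd
  obtain ⟨b, hbT, hb⟩ := hbdd
  -- pointwise images
  set Ai : ∀ i, Set (E i) := fun i => (fun a => a i) '' A with hAi
  have hAne : ∀ i, (Ai i).Nonempty := fun i => hne.image _
  have hAbdd : ∀ i, BddAbove (Ai i) := by
    intro i
    exact ⟨b i, by rintro _ ⟨a, ha, rfl⟩; exact hb a ha i⟩
  choose m hm using fun i => hDC i (Ai i) (hAne i) (hAbdd i)
  have himg : ∀ (i j : I) (h : i ≤ j), (p h) '' (Ai j) = Ai i := by
    intro i j h
    ext x
    constructor
    · rintro ⟨_, ⟨a, ha, rfl⟩, rfl⟩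
      exact ⟨a, ha, by exact (hA ha i j h).symm⟩
    · rintro ⟨a, ha, rfl⟩
      exact ⟨a j, ⟨a, ha, rfl⟩, by exact hA ha i j h⟩
  have hmT : m ∈ threads p := by
    intro i j h
    have h1 : IsLUB ((p h) '' (Ai j)) (p h (m j)) := (hpn h).2.2 _ _ (hm j)
    rw [himg i j h] at h1
    exact h1.unique (hm i)
  refine ⟨m, hmT, ?_, ?_⟩
  · intro a ha i
    exact (hm i).1 ⟨a, ha, rfl⟩
  · intro c hcT hc i
    exact (hm i).2 (by rintro _ ⟨a, ha, rfl⟩; exact hc a ha i)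
end

section
/- Let ((E_α), (p_{β,α})) be an inverse system of Archimedean, relatively uniformly complete vector lattices with lattice homomorphism connecting maps, and let E be its inverse limit. Then E is relatively uniformly complete. -/
section Aux

variable {A : Type*} [Lattice A] [AddCommGroup A]
  [CovariantClass A A (· + ·) (· ≤ ·)] [Module ℝ A]

/-- Archimedean trick: if `a ≤ ε • w` for all positive `ε`, then `a ≤ 0`. -/
lemma aux_le_zero (harch : ∀ (u v : A), (∀ n : ℕ, n • u ≤ v) → u ≤ 0)
    {a w : A} (hw : 0 ≤ w) (h : ∀ ε : ℝ, 0 < ε → a ≤ ε • w) : a ≤ 0 := by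
  refine harch a w fun n => ?_
  cases n with
  | zero => simpa using hw
  | succ k =>
    have hpos : (0:ℝ) < ((k+1 : ℕ) : ℝ) := by positivity
    have h1 : a ≤ (1 / ((k+1:ℕ):ℝ)) • w := h _ (by positivity)
    have h2 : (k+1 : ℕ) • a ≤ (k+1 : ℕ) • ((1 / ((k+1:ℕ):ℝ)) • w) :=
      nsmul_le_nsmul_right h1 _
    calc (k+1:ℕ) • a ≤ (k+1:ℕ) • ((1 / ((k+1:ℕ):ℝ)) • w) := h2
      _ = w := by
        rw [← Nat.cast_smul_eq_nsmul ℝ, smul_smul, mul_one_div, div_self hpos.ne',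
          one_smul]

end Aux

/-- An inverse limit of Archimedean, relatively uniformly complete
vector lattices (with lattice homomorphisms as connecting maps) is relatively
uniformly complete: every sequence of threads which is relatively uniformly Cauchy
with respect to a regulator which is a thread converges relatively uniformly, within
the thread sublattice, to a thread. -/
theorem inverseLimit_relativelyUniformlyComplete
    {I : Type*} [Preorder I] [IsDirected I (· ≤ ·)]
    {E : I → Type*} [∀ i, Lattice (E i)] [∀ i, AddCommGroup (E i)]
    [∀ i, CovariantClass (E i) (E i) (· + ·) (· ≤ ·)] [∀ i, Module ℝ (E i)]
    (p : ∀ {i j : I}, i ≤ j → (E j →ₗ[ℝ] E i))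
    (hplat : ∀ {i j : I} (h : i ≤ j) (a b : E j), p h (a ⊔ b) = p h a ⊔ p h b)
    (hpcomp : ∀ {i j k : I} (hij : i ≤ j) (hjk : j ≤ k) (x : E k),
      p hij (p hjk x) = p (hij.trans hjk) x)
    -- each `E_α` is Archimedean
    (harch : ∀ (i : I) (u v : E i), (∀ n : ℕ, n • u ≤ v) → u ≤ 0)
    -- each `E_α` is relatively uniformly complete
    (hruc : ∀ (i : I) (x : ℕ → E i) (w : E i), 0 ≤ w →
      (∀ ε : ℝ, 0 < ε → ∃ N : ℕ, ∀ m n : ℕ, N ≤ m → N ≤ n → |x m - x n| ≤ ε • w) →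
      ∃ (y : E i) (w' : E i), 0 ≤ w' ∧
        ∀ ε : ℝ, 0 < ε → ∃ N : ℕ, ∀ n : ℕ, N ≤ n → |x n - y| ≤ ε • w') :
    -- conclusion: the thread sublattice is relatively uniformly complete
    ∀ (x : ℕ → ∀ i, E i), (∀ n, x n ∈ threads p) →
      ∀ w ∈ threads p, 0 ≤ w →
      (∀ ε : ℝ, 0 < ε → ∃ N : ℕ, ∀ m n : ℕ, N ≤ m → N ≤ n → |x m - x n| ≤ ε • w) →
      ∃ y ∈ threads p, ∃ w' ∈ threads p, 0 ≤ w' ∧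
        ∀ ε : ℝ, 0 < ε → ∃ N : ℕ, ∀ n : ℕ, N ≤ n → |x n - y| ≤ ε • w' := by
  intro x hx w hw hw0 hcauchy
  -- p is monotone
  have hmono : ∀ {i j : I} (h : i ≤ j) {a b : E j}, a ≤ b → p h a ≤ p h b := by
    intro i j h a b hab
    calc p h a ≤ p h a ⊔ p h b := le_sup_left
      _ = p h (a ⊔ b) := (hplat h a b).symm
      _ = p h b := by rw [sup_eq_right.2 hab]
  -- p commutes with abs
  have habs : ∀ {i j : I} (h : i ≤ j) (z : E j), p h |z| = |p h z| := by
    intro i j h z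
    have h1 : |z| = z ⊔ -z := rfl
    have h2 : |p h z| = p h z ⊔ -(p h z) := rfl
    rw [h1, h2, hplat h z (-z), map_neg]
  -- componentwise Cauchy
  have hcw : ∀ i : I, ∀ ε : ℝ, 0 < ε → ∃ N : ℕ, ∀ m n : ℕ, N ≤ m → N ≤ n →
      |x m i - x n i| ≤ ε • w i := by
    intro i ε hε
    obtain ⟨N, hN⟩ := hcauchy ε hε
    exact ⟨N, fun m n hm hn => hN m n hm hn i⟩
  -- choose componentwise limits
  choose y w' hw' hconv using fun i => hruc i (fun n => x n i) (w i) (hw0 i) (hcw i)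
  -- the limit is reached with regulator w, uniformly
  have hbound : ∀ ε : ℝ, 0 < ε → ∃ N : ℕ, ∀ n : ℕ, N ≤ n → ∀ i : I,
      |x n i - y i| ≤ ε • w i := by
    intro ε hε
    obtain ⟨N, hN⟩ := hcauchy ε hε
    refine ⟨N, fun n hn i => ?_⟩
    have key : ∀ δ : ℝ, 0 < δ → |x n i - y i| - ε • w i ≤ δ • w' i := by
      intro δ hδ
      obtain ⟨M, hM⟩ := hconv i δ hδ
      set m := max N M with hm
      have h1 : |x n i - x m i| ≤ ε • w i := hN n m hn (le_max_left _ _) i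
      have h2 : |x m i - y i| ≤ δ • w' i := hM m (le_max_right _ _)
      have h3 : |x n i - y i| ≤ |x n i - x m i| + |x m i - y i| := by
        have := abs_add_le (x n i - x m i) (x m i - y i)
        rwa [sub_add_sub_cancel] at this
      have h4 := h3.trans (add_le_add h1 h2)
      rwa [sub_le_iff_le_add, add_comm]
    have h5 := aux_le_zero (harch i) (hw' i) key
    rwa [sub_nonpos] at h5
  -- y is a thread
  have hythread : y ∈ threads p := by
    intro i j h
    have key : ∀ ε : ℝ, 0 < ε → |y i - p h (y j)| ≤ ε • w i := by
      intro ε hε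
      have hε2 : (0:ℝ) < ε / 2 := by linarith
      obtain ⟨N, hN⟩ := hbound (ε/2) hε2
      have h1 : |x N i - y i| ≤ (ε/2) • w i := hN N le_rfl i
      have h2 : |x N j - y j| ≤ (ε/2) • w j := hN N le_rfl j
      have h3 : |x N i - p h (y j)| ≤ (ε/2) • w i := by
        have := hmono h h2
        rw [habs h, map_smul, map_sub] at this
        rw [hx N i j h, hw i j h] at this
        exact this
      have h4 : |y i - p h (y j)| ≤ |y i - x N i| + |x N i - p h (y j)| := by
        have := abs_add_le (y i - x N i) (x N i - p h (y j))
        rwa [sub_add_sub_cancel] at this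
      have h5 : |y i - x N i| = |x N i - y i| := abs_sub_comm _ _
      calc |y i - p h (y j)| ≤ |y i - x N i| + |x N i - p h (y j)| := h4
        _ ≤ (ε/2) • w i + (ε/2) • w i := by rw [h5]; exact add_le_add h1 h3
        _ = ε • w i := by rw [← add_smul]; ring_nf
    have hle : |y i - p h (y j)| ≤ 0 := aux_le_zero (harch i) (hw0 i) key
    have h6 : y i - p h (y j) ≤ 0 := (le_abs_self _).trans hle
    have h7 : -(y i - p h (y j)) ≤ 0 := (neg_le_abs _).trans hle
    have h8 : y i - p h (y j) = 0 := le_antisymm h6 (by simpa using h7)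
    exact (sub_eq_zero.mp h8).symm
  refine ⟨y, hythread, w, hw, hw0, fun ε hε => ?_⟩
  obtain ⟨N, hN⟩ := hbound ε hε
  exact ⟨N, fun n hn => fun i => hN n hn i⟩
end

section
/- Let ((E_n)_{n∈ℕ}, (p_{m,n})) be an inverse system of vector lattices over ℕ, with surjective interval preserving lattice homomorphisms as connecting maps, and let (E,(p_n)) be its inverse limit. Then the order dual E^∼ equals the union over n of the ranges of the adjoints p_n^∼ : (E_n)^∼ → E^∼; that is, every order bounded linear functional on E factors through some p_n. -/
lemma build_thread_aux {E : ℕ → Type*} [∀ n, AddCommGroup (E n)] [∀ n, Module ℝ (E n)]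
    (p : ∀ {n m : ℕ}, n ≤ m → (E m →ₗ[ℝ] E n))
    (hpsurj : ∀ {n m : ℕ} (h : n ≤ m), Function.Surjective (p h))
    (hpcomp : ∀ {n m k : ℕ} (hnm : n ≤ m) (hmk : m ≤ k) (x : E k),
      p hnm (p hmk x) = p (hnm.trans hmk) x)
    (P : ∀ m, E m → Prop) (n : ℕ) (a : E n) (ha : P n a)
    (step : ∀ m, ∀ b : E m, P m b → ∃ c : E (m + 1), p (Nat.le_succ m) c = b ∧ P (m + 1) c) :
    ∃ t : ∀ m, E m, (∀ (k m : ℕ) (h : k ≤ m), p h (t m) = t k) ∧ t n = a ∧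
      ∀ m, n ≤ m → P m (t m) := by
  have hrefl : ∀ (k : ℕ) (x : E k), p (le_refl k) x = x := by
    intro k x
    obtain ⟨y, rfl⟩ := hpsurj (le_refl k) x
    exact hpcomp (le_refl k) (le_refl k) y
  choose c hc1 hc2 using step
  let u : ∀ j : ℕ, {b : E (n + j) // P (n + j) b} :=
    fun j => Nat.rec ⟨a, ha⟩ (fun j prev => ⟨c (n + j) prev.1 prev.2, hc2 (n + j) prev.1 prev.2⟩) j
  have huS : ∀ j, p (Nat.le_succ (n + j)) (u (j + 1)).1 = (u j).1 := fun j =>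
    hc1 (n + j) (u j).1 (u j).2
  have chain : ∀ (i j : ℕ) (h : i ≤ j), p (Nat.add_le_add_left h n) (u j).1 = (u i).1 := by
    intro i j h
    induction j with
    | zero => interval_cases i; exact hrefl _ _
    | succ j ih =>
      rcases Nat.lt_or_ge i (j + 1) with hi | hi
      · have hij : i ≤ j := Nat.lt_succ_iff.mp hi
        rw [← ih hij, ← huS j, hpcomp]
      · have : i = j + 1 := le_antisymm h hi
        subst this
        exact hrefl _ _
  refine ⟨fun m => p (Nat.le_add_left m n) (u m).1, ?_, ?_, ?_⟩
  · intro k m h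
    have h1 : p (Nat.add_le_add_left h n) (u m).1 = (u k).1 := chain k m h
    calc p h (p (Nat.le_add_left m n) (u m).1)
        = p (h.trans (Nat.le_add_left m n)) (u m).1 := hpcomp _ _ _
      _ = p ((Nat.le_add_left k n).trans (Nat.add_le_add_left h n)) (u m).1 := rfl
      _ = p (Nat.le_add_left k n) (p (Nat.add_le_add_left h n) (u m).1) :=
          (hpcomp _ _ _).symm
      _ = p (Nat.le_add_left k n) (u k).1 := by rw [h1]
  · have h0 : p (Nat.add_le_add_left (Nat.zero_le n) n) (u n).1 = (u 0).1 := chain 0 n (Nat.zero_le n)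
    calc p (Nat.le_add_left n n) (u n).1
        = p (Nat.add_le_add_left (Nat.zero_le n) n) (u n).1 := rfl
      _ = a := h0
  · intro m hm
    obtain ⟨j, rfl⟩ := Nat.exists_eq_add_of_le hm
    have hj : p (Nat.add_le_add_left (Nat.le_add_left j n) n) (u (n + j)).1 = (u j).1 :=
      chain j (n + j) (Nat.le_add_left j n)
    have h2 : p (Nat.le_add_left (n + j) n) (u (n + j)).1 = (u j).1 := hj
    show P (n + j) (p (Nat.le_add_left (n + j) n) (u (n + j)).1)
    rw [h2]
    exact (u j).2

lemma latgrp_sum_nonneg {ι G : Type*} [Lattice G] [AddCommGroup G]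
    [CovariantClass G G (· + ·) (· ≤ ·)] (s : Finset ι) (f : ι → G)
    (h : ∀ i ∈ s, 0 ≤ f i) : 0 ≤ ∑ i ∈ s, f i := by
  classical
  induction s using Finset.induction with
  | empty => simp
  | @insert a s ha ih =>
    rw [Finset.sum_insert ha]
    calc (0 : G) = 0 + 0 := (add_zero 0).symm
      _ ≤ f a + ∑ i ∈ s, f i :=
        add_le_add (h a (Finset.mem_insert_self a s))
          (ih fun i hi => h i (Finset.mem_insert_of_mem hi))

/-- Let `((E_n)_{n∈ℕ}, (p_{mn}))` be an inverse system of vector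
lattices over `ℕ` with surjective interval preserving lattice homomorphisms as
connecting maps, and let `(E, (p_n))` be its inverse limit (expressed here by: the
`p_n` form a compatible system of lattice homomorphisms which jointly separate the
points of `E`, and whose joint image is exactly the thread set).  Then the order dual
`E^∼` is the union of the ranges of the adjoints `p_n^∼`: every order bounded linear
functional on `E` factors as `ψ ∘ p_n` for some `n` and some order bounded `ψ` on
`E_n`. -/
theorem orderDual_of_inverseLimit_nat
    {E : ℕ → Type*} [∀ n, Lattice (E n)] [∀ n, AddCommGroup (E n)]
    [∀ n, CovariantClass (E n) (E n) (· + ·) (· ≤ ·)] [∀ n, Module ℝ (E n)]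
    (p : ∀ {n m : ℕ}, n ≤ m → (E m →ₗ[ℝ] E n))
    (hplat : ∀ {n m : ℕ} (h : n ≤ m) (a b : E m), p h (a ⊔ b) = p h a ⊔ p h b)
    (hpsurj : ∀ {n m : ℕ} (h : n ≤ m), Function.Surjective (p h))
    (hpip : ∀ {n m : ℕ} (h : n ≤ m) (u : E m), 0 ≤ u →
      (p h) '' Set.Icc 0 u = Set.Icc 0 (p h u))
    (hpcomp : ∀ {n m k : ℕ} (hnm : n ≤ m) (hmk : m ≤ k) (x : E k),
      p hnm (p hmk x) = p (hnm.trans hmk) x)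
    {L : Type*} [Lattice L] [AddCommGroup L]
    [CovariantClass L L (· + ·) (· ≤ ·)] [Module ℝ L]
    (q : ∀ n : ℕ, L →ₗ[ℝ] E n)
    (hqlat : ∀ (n : ℕ) (a b : L), q n (a ⊔ b) = q n a ⊔ q n b)
    (hqcompat : ∀ {n m : ℕ} (h : n ≤ m) (x : L), p h (q m x) = q n x)
    (hsep : ∀ x y : L, (∀ n, q n x = q n y) → x = y)
    (hthreads : ∀ t : ∀ n, E n, (∀ (n m : ℕ) (h : n ≤ m), p h (t m) = t n) →
      ∃ x : L, ∀ n, q n x = t n) :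
    ∀ φ : L →ₗ[ℝ] ℝ, OrdBddFunctional φ →
      ∃ (n : ℕ) (ψ : E n →ₗ[ℝ] ℝ), OrdBddFunctional ψ ∧ φ = ψ.comp (q n) := by
  intro φ hφ
  -- basic positivity facts
  have hqpos : ∀ (n : ℕ) (x : L), 0 ≤ x → 0 ≤ q n x := by
    intro n x hx
    have h1 : q n x ⊔ 0 = q n x := by
      rw [← map_zero (q n), ← hqlat, sup_of_le_left hx]
    exact sup_eq_left.mp h1
  have hppos : ∀ {n m : ℕ} (h : n ≤ m) (x : E m), 0 ≤ x → 0 ≤ p h x := by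
    intro n m h x hx
    have h1 : p h x ⊔ 0 = p h x := by
      rw [← map_zero (p h), ← hplat, sup_of_le_left hx]
    exact sup_eq_left.mp h1
  have hpmono : ∀ {n m : ℕ} (h : n ≤ m) {a b : E m}, a ≤ b → p h a ≤ p h b := by
    intro n m h a b hab
    have h1 : p h a ⊔ p h b = p h b := by rw [← hplat, sup_of_le_right hab]
    exact sup_eq_right.mp h1
  have hpos : ∀ x : L, (∀ n, 0 ≤ q n x) → 0 ≤ x := by
    intro x hx
    have h1 : x ⊔ 0 = x := hsep _ _ (fun n => by
      rw [hqlat, map_zero, sup_of_le_left (hx n)])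
    exact sup_eq_left.mp h1
  have hle : ∀ x y : L, (∀ n, q n x ≤ q n y) → x ≤ y := by
    intro x y h
    have := hpos (y - x) (fun n => by rw [map_sub]; exact sub_nonneg.mpr (h n))
    exact sub_nonneg.mp this
  have habsq : ∀ (n : ℕ) (x : L), q n |x| = |q n x| := by
    intro n x
    have h1 : |x| = x ⊔ -x := rfl
    have h2 : |q n x| = q n x ⊔ -(q n x) := rfl
    rw [h1, h2, hqlat, map_neg]
  -- Step A: φ vanishes on some kernel
  have hA : ∃ n : ℕ, ∀ x : L, q n x = 0 → φ x = 0 := by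
    by_contra hcon
    push_neg at hcon
    choose x hx0 hxφ using hcon
    set z : ℕ → L := fun k => (φ (x k))⁻¹ • x k with hz
    have hφz : ∀ k, φ (z k) = 1 := by
      intro k
      rw [hz]
      simp only [map_smul, smul_eq_mul]
      exact inv_mul_cancel₀ (hxφ k)
    have hqz : ∀ k, q k (z k) = 0 := by
      intro k
      rw [hz]
      simp only [map_smul, hx0 k, smul_zero]
    set y : ℕ → L := fun k => |z k| with hy
    have hy0 : ∀ k, 0 ≤ y k := fun k => abs_nonneg _
    have hqy : ∀ (n k : ℕ), n ≤ k → q n (y k) = 0 := by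
      intro n k hnk
      rw [← hqcompat hnk, hy]
      simp only
      rw [habsq, hqz, abs_zero, map_zero]
    set s : ℕ → L := fun N => ∑ k ∈ Finset.range N, k • y k with hs
    have hqs : ∀ (n N : ℕ), q n (s N) = ∑ k ∈ Finset.range N, k • q n (y k) := by
      intro n N
      rw [hs]
      simp only [map_sum, map_nsmul]
    have hqsn : ∀ (n N : ℕ), n ≤ N → q n (s N) = q n (s n) := by
      intro n N h
      rw [hqs, hqs]
      rw [← Finset.sum_range_add_sum_Ico _ h]
      have : ∑ k ∈ Finset.Ico n N, k • q n (y k) = 0 := by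
        apply Finset.sum_eq_zero
        intro k hk
        rw [hqy n k (Finset.mem_Ico.mp hk).1, smul_zero]
      rw [this, add_zero]
    set t : ∀ n, E n := fun n => q n (s n) with ht
    have hthread_t : ∀ (n m : ℕ) (h : n ≤ m), p h (t m) = t n := by
      intro n m h
      rw [ht]
      simp only
      rw [hqcompat h (s m)]
      exact hqsn n m h
    obtain ⟨w, hw⟩ := hthreads t hthread_t
    have hws : ∀ N, s N ≤ w := by
      intro N
      apply hle
      intro n
      rw [hw n, ht]
      simp only
      rcases le_total N n with h | h
      · rw [hqs, hqs, ← Finset.sum_range_add_sum_Ico (fun k => k • q n (y k)) h]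
        refine le_add_of_nonneg_right (latgrp_sum_nonneg _ _ ?_)
        intro k _
        exact nsmul_nonneg (hqpos n _ (hy0 k)) k
      · exact le_of_eq (hqsn n N h)
    have hw0 : 0 ≤ w := by
      have h0 := hws 0
      rw [hs] at h0
      simpa using h0
    obtain ⟨⟨M, hM⟩, ⟨m', hm'⟩⟩ := hφ w hw0
    obtain ⟨K, hK⟩ := exists_nat_gt (M - m')
    have hyk : ∀ k : ℕ, k • y k ≤ w := by
      intro k
      refine le_trans ?_ (hws (k + 1))
      rw [hs]
      simp only
      rw [Finset.sum_range_succ]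
      refine le_add_of_nonneg_left (latgrp_sum_nonneg _ _ ?_)
      intro j _
      exact nsmul_nonneg (hy0 j) j
    set a := (z K) ⊔ 0 with ha
    set b := (-(z K)) ⊔ 0 with hb
    have hab : a - b = z K := by
      have h1 : (z K)⁺ - (z K)⁻ = z K := posPart_sub_negPart _
      rw [posPart_def, negPart_def] at h1
      rw [ha, hb]
      exact h1
    have ha1 : 0 ≤ a := le_sup_right
    have hb1 : 0 ≤ b := le_sup_right
    have ha2 : a ≤ y K := sup_le (le_abs_self _) (abs_nonneg _)
    have hb2 : b ≤ y K := sup_le (neg_le_abs _) (abs_nonneg _)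
    have hKa : φ (K • a) ≤ M :=
      hM ⟨K • a, ⟨nsmul_nonneg ha1 K, le_trans (nsmul_le_nsmul_right ha2 K) (hyk K)⟩, rfl⟩
    have hKb : m' ≤ φ (K • b) :=
      hm' ⟨K • b, ⟨nsmul_nonneg hb1 K, le_trans (nsmul_le_nsmul_right hb2 K) (hyk K)⟩, rfl⟩
    have hsum : φ (K • a) - φ (K • b) = (K : ℝ) := by
      rw [← map_sub, ← smul_sub, hab, map_nsmul, hφz K, nsmul_eq_mul, mul_one]
    linarith
  obtain ⟨n, hker⟩ := hA
  -- q n is surjective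
  have hqsurj : Function.Surjective (q n) := by
    intro u
    obtain ⟨t, htc, htn, -⟩ := build_thread_aux (fun h => p h) hpsurj hpcomp
      (fun _ _ => True) n u trivial
      (fun m b _ => by
        obtain ⟨c, hc⟩ := hpsurj (Nat.le_succ m) b
        exact ⟨c, hc, trivial⟩)
    obtain ⟨x, hx⟩ := hthreads t htc
    exact ⟨x, by rw [hx n, htn]⟩
  have key : ∀ x y : L, q n x = q n y → φ x = φ y := by
    intro x y hxy
    have h1 : φ (x - y) = 0 := hker _ (by rw [map_sub, hxy, sub_self])
    rw [map_sub] at h1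
    linarith
  set sec : E n → L := Function.surjInv hqsurj with hsecdef
  have hsec : ∀ u, q n (sec u) = u := fun u => Function.surjInv_eq hqsurj u
  set ψ : E n →ₗ[ℝ] ℝ :=
    { toFun := fun u => φ (sec u)
      map_add' := by
        intro u v
        show φ (sec (u + v)) = φ (sec u) + φ (sec v)
        have h1 : φ (sec (u + v)) = φ (sec u + sec v) :=
          key _ _ (by rw [map_add, hsec, hsec, hsec])
        rw [h1, map_add]
      map_smul' := by
        intro r u
        show φ (sec (r • u)) = r • φ (sec u)
        have h1 : φ (sec (r • u)) = φ (r • sec u) :=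
          key _ _ (by rw [map_smul, hsec, hsec])
        rw [h1, map_smul] } with hψ
  refine ⟨n, ψ, ?_, ?_⟩
  · -- ψ is order bounded
    intro u hu
    obtain ⟨v0, hv0⟩ := hqsurj u
    set v := v0 ⊔ 0 with hvdef
    have hv : q n v = u := by rw [hvdef, hqlat, map_zero, hv0, sup_of_le_left hu]
    have hvpos : 0 ≤ v := le_sup_right
    have hqv : ∀ m, 0 ≤ q m v := fun m => hqpos m v hvpos
    have hsub : ψ '' Set.Icc 0 u ⊆ φ '' Set.Icc 0 v := by
      rintro - ⟨aE, ⟨ha0, hau⟩, rfl⟩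
      have hau' : aE ≤ q n v := hv ▸ hau
      obtain ⟨t, htc, htn, htP⟩ := build_thread_aux (fun h => p h) hpsurj hpcomp
        (fun m b => b ∈ Set.Icc 0 (q m v)) n aE ⟨ha0, hau'⟩
        (fun m b hb => by
          have h1 : p (Nat.le_succ m) (q (m + 1) v) = q m v := hqcompat _ v
          have h2 := hpip (Nat.le_succ m) (q (m + 1) v) (hqv (m + 1))
          have h3 : b ∈ p (Nat.le_succ m) '' Set.Icc 0 (q (m + 1) v) := by
            rw [h2, h1]; exact hb
          obtain ⟨c, hc1, hc2⟩ := h3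
          exact ⟨c, hc2, hc1⟩)
      have htPall : ∀ m, t m ∈ Set.Icc 0 (q m v) := by
        intro m
        rcases le_total n m with h | h
        · exact htP m h
        · have h1 : p h (t n) = t m := htc m n h
          rw [← h1, htn]
          refine ⟨hppos h aE ha0, ?_⟩
          have h2 := hpmono h hau'
          rwa [hqcompat h v] at h2
      obtain ⟨xx, hxx⟩ := hthreads t htc
      have hx0 : 0 ≤ xx := hpos xx (fun m => by rw [hxx m]; exact (htPall m).1)
      have hxv : xx ≤ v := hle xx v (fun m => by rw [hxx m]; exact (htPall m).2)
      refine ⟨xx, ⟨hx0, hxv⟩, ?_⟩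
      show φ xx = φ (sec aE)
      exact key xx (sec aE) (by rw [hxx n, htn, hsec])
    obtain ⟨hb1, hb2⟩ := hφ v hvpos
    exact ⟨hb1.mono hsub, hb2.mono hsub⟩
  · ext x
    show φ x = φ (sec (q n x))
    exact key x _ (by rw [hsec])
end

section
/- Let ((E_α)_{α∈I}, (p_{β,α})) be an inverse system of vector lattices with lattice homomorphism connecting maps, and (E, (p_α)) its inverse limit. If each E_α has a separating order dual (i.e., the order bounded functionals separate points of E_α), then E has a separating order dual. -/
/-- Let `((E_α), (p_{βα}))` be an inverse system of vector lattices with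
lattice homomorphism connecting maps, and `(L, (q_α))` its inverse limit (expressed
here by: the `q_α` form a compatible system of lattice homomorphisms which jointly
separate the points of `L` and whose joint image is exactly the thread set).  If each
`E_α` has a separating order dual, then `L` has a separating order dual. -/
theorem inverseLimit_separating_orderDual
    {I : Type*} [Preorder I] [IsDirected I (· ≤ ·)]
    {E : I → Type*} [∀ i, Lattice (E i)] [∀ i, AddCommGroup (E i)]
    [∀ i, CovariantClass (E i) (E i) (· + ·) (· ≤ ·)] [∀ i, Module ℝ (E i)]
    (p : ∀ {i j : I}, i ≤ j → (E j →ₗ[ℝ] E i))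
    (hplat : ∀ {i j : I} (h : i ≤ j) (a b : E j), p h (a ⊔ b) = p h a ⊔ p h b)
    (hpcomp : ∀ {i j k : I} (hij : i ≤ j) (hjk : j ≤ k) (x : E k),
      p hij (p hjk x) = p (hij.trans hjk) x)
    {L : Type*} [Lattice L] [AddCommGroup L]
    [CovariantClass L L (· + ·) (· ≤ ·)] [Module ℝ L]
    (q : ∀ i : I, L →ₗ[ℝ] E i)
    (hqlat : ∀ (i : I) (a b : L), q i (a ⊔ b) = q i a ⊔ q i b)
    (hqcompat : ∀ {i j : I} (h : i ≤ j) (x : L), p h (q j x) = q i x)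
    (hsep : ∀ x y : L, (∀ i, q i x = q i y) → x = y)
    (hthreads : ∀ t : ∀ i, E i, (∀ (i j : I) (h : i ≤ j), p h (t j) = t i) →
      ∃ x : L, ∀ i, q i x = t i)
    -- each `E_α` has a separating order dual
    (hEsep : ∀ (i : I) (u : E i), u ≠ 0 →
      ∃ φ : E i →ₗ[ℝ] ℝ, OrdBddFunctional φ ∧ φ u ≠ 0) :
    ∀ x : L, x ≠ 0 → ∃ φ : L →ₗ[ℝ] ℝ, OrdBddFunctional φ ∧ φ x ≠ 0 := by
  intro x hx
  -- find an index where x is nonzero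
  have : ∃ i, q i x ≠ 0 := by
    by_contra h
    push_neg at h
    exact hx (hsep x 0 (fun i => by simpa using h i))
  obtain ⟨i, hi⟩ := this
  obtain ⟨ψ, hψbdd, hψx⟩ := hEsep i (q i x) hi
  refine ⟨ψ.comp (q i), ?_, by simpa using hψx⟩
  -- q i is monotone
  have hmono : Monotone (q i) := by
    intro a b hab
    have : q i (a ⊔ b) = q i a ⊔ q i b := hqlat i a b
    rw [sup_eq_right.mpr hab] at this
    exact le_sup_left.trans this.ge
  intro u hu
  have h0 : (0 : E i) ≤ q i u := by simpa using hmono hu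
  obtain ⟨hA, hB⟩ := hψbdd (q i u) h0
  have hsub : (ψ.comp (q i)) '' Set.Icc 0 u ⊆ ψ '' Set.Icc 0 (q i u) := by
    rintro _ ⟨v, ⟨hv0, hv1⟩, rfl⟩
    exact ⟨q i v, ⟨by simpa using hmono hv0, hmono hv1⟩, rfl⟩
  exact ⟨hA.mono hsub, hB.mono hsub⟩
end
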